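/- Let n ≥ 1, let W be an n×n symmetric doubly stochastic real matrix, set σ₂ := the operator norm of W − (1/n)𝟙𝟙ᵀ, and set ρ := 1 − (1 − σ₂)/4. Let y₁, …, yₙ be points of a real inner product space with mean ȳ = (1/n)∑ᵢ yᵢ, and define the consensus update with step-size s = 1/2: xᵢ := yᵢ + (1/2)∑_{j=1}^n W i j (yⱼ − yᵢ). Then the mean of x₁, …, xₙ equals ȳ and ∑_{i=1}^n ‖xᵢ − ȳ‖² ≤ ρ · ∑_{i=1}^n ‖yᵢ − ȳ‖²; in particular the variance satisfies Var({xᵢ}) := (1/n)∑ᵢ‖xᵢ − x̄‖² ≤ ρ · Var({yᵢ}). -/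

import Mathlib

open scoped BigOperators

open Matrix Finset in
private lemma euclid_mulVec_bound {n : ℕ} (A : Matrix (Fin n) (Fin n) ℝ) (v : Fin n → ℝ) :
    ∑ i, (A *ᵥ v) i ^ 2 ≤
      ‖(Matrix.toEuclideanCLM (𝕜 := ℝ) A :
        EuclideanSpace ℝ (Fin n) →L[ℝ] EuclideanSpace ℝ (Fin n))‖ ^ 2 * ∑ i, v i ^ 2 := by
  set c := ‖(Matrix.toEuclideanCLM (𝕜 := ℝ) A :
        EuclideanSpace ℝ (Fin n) →L[ℝ] EuclideanSpace ℝ (Fin n))‖ with hc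
  set x : EuclideanSpace ℝ (Fin n) := (WithLp.equiv 2 _).symm v with hxdef
  have h := (Matrix.toEuclideanCLM (𝕜 := ℝ) A).le_opNorm x
  have hAx : Matrix.toEuclideanCLM (𝕜 := ℝ) A x = (WithLp.equiv 2 _).symm (A *ᵥ v) := by
    rw [hxdef]; rfl
  rw [hAx] at h
  have hn1 : ‖(WithLp.equiv 2 ((Fin n) → ℝ)).symm (A *ᵥ v)‖
      = Real.sqrt (∑ i, (A *ᵥ v) i ^ 2) := by
    rw [EuclideanSpace.norm_eq]; simp [Real.norm_eq_abs, sq_abs]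
  have hn2 : ‖x‖ = Real.sqrt (∑ i, v i ^ 2) := by
    rw [hxdef, EuclideanSpace.norm_eq]; simp [Real.norm_eq_abs, sq_abs]
  rw [hn1, hn2] at h
  have h1 : (0:ℝ) ≤ ∑ i, (A *ᵥ v) i ^ 2 := Finset.sum_nonneg fun _ _ => sq_nonneg _
  have h2 : (0:ℝ) ≤ ∑ i, v i ^ 2 := Finset.sum_nonneg fun _ _ => sq_nonneg _
  have h3 := mul_self_le_mul_self (Real.sqrt_nonneg _) h
  rw [Real.mul_self_sqrt h1] at h3
  calc ∑ i, (A *ᵥ v) i ^ 2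
      ≤ (c * Real.sqrt (∑ i, v i ^ 2)) * (c * Real.sqrt (∑ i, v i ^ 2)) := h3
    _ = c ^ 2 * ∑ i, v i ^ 2 := by
        rw [mul_mul_mul_comm, Real.mul_self_sqrt h2]; ring

open Finset in
private lemma sum_rotate3 {α : Type*} [AddCommMonoid α] {n : ℕ} (f : Fin n → Fin n → Fin n → α) :
    ∑ j, ∑ k, ∑ l, f j k l = ∑ l, ∑ j, ∑ k, f j k l :=
  calc ∑ j, ∑ k, ∑ l, f j k l = ∑ j, ∑ l, ∑ k, f j k l :=
        Finset.sum_congr rfl (fun _ _ => Finset.sum_comm)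
    _ = ∑ l, ∑ j, ∑ k, f j k l := Finset.sum_comm

private lemma sq_norm_sum_smul {n : ℕ} {E : Type*} [NormedAddCommGroup E]
    [InnerProductSpace ℝ E] (z : Fin n → E) (b : Fin n → ℝ) :
    ‖∑ j, b j • z j‖ ^ 2 = ∑ j, ∑ k, b j * b k * inner ℝ (z j) (z k) := by
  rw [← real_inner_self_eq_norm_sq, sum_inner]
  refine Finset.sum_congr rfl fun j _ => ?_
  rw [inner_sum]
  refine Finset.sum_congr rfl fun k _ => ?_
  rw [real_inner_smul_left, real_inner_smul_right]; ring

open Matrix Finset MatrixOrder in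
private lemma gram_nonneg {n : ℕ} {M : Matrix (Fin n) (Fin n) ℝ} (hM : M.PosSemidef)
    {E : Type*} [NormedAddCommGroup E] [InnerProductSpace ℝ E] (z : Fin n → E) :
    0 ≤ ∑ j, ∑ k, M j k * inner ℝ (z j) (z k) := by
  obtain ⟨B, rfl⟩ := CStarAlgebra.nonneg_iff_eq_star_mul_self.mp hM.nonneg
  rw [Matrix.star_eq_conjTranspose]
  have key : ∑ j, ∑ k, (Bᴴ * B) j k * (inner ℝ (z j) (z k) : ℝ)
      = ∑ l, ‖∑ j, B l j • z j‖ ^ 2 := by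
    calc ∑ j, ∑ k, (Bᴴ * B) j k * (inner ℝ (z j) (z k) : ℝ)
        = ∑ j, ∑ k, ∑ l, B l j * B l k * (inner ℝ (z j) (z k) : ℝ) := by
          refine Finset.sum_congr rfl fun j _ => Finset.sum_congr rfl fun k _ => ?_
          rw [Matrix.mul_apply, Finset.sum_mul]
          refine Finset.sum_congr rfl fun l _ => ?_
          simp [Matrix.conjTranspose_apply]
      _ = ∑ l, ∑ j, ∑ k, B l j * B l k * (inner ℝ (z j) (z k) : ℝ) := sum_rotate3 _
      _ = ∑ l, ‖∑ j, B l j • z j‖ ^ 2 := by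
          refine Finset.sum_congr rfl fun l _ => ?_
          rw [sq_norm_sum_smul]
  rw [key]
  exact Finset.sum_nonneg fun _ _ => sq_nonneg _

open Matrix Finset in
private lemma sum_norm_smul_le {n : ℕ} (A : Matrix (Fin n) (Fin n) ℝ)
    {E : Type*} [NormedAddCommGroup E] [InnerProductSpace ℝ E] (z : Fin n → E) :
    ∑ i, ‖∑ j, A i j • z j‖ ^ 2 ≤
      ‖(Matrix.toEuclideanCLM (𝕜 := ℝ) A :
        EuclideanSpace ℝ (Fin n) →L[ℝ] EuclideanSpace ℝ (Fin n))‖ ^ 2 * ∑ j, ‖z j‖ ^ 2 := by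
  set c := ‖(Matrix.toEuclideanCLM (𝕜 := ℝ) A :
        EuclideanSpace ℝ (Fin n) →L[ℝ] EuclideanSpace ℝ (Fin n))‖ with hc
  set M : Matrix (Fin n) (Fin n) ℝ := c ^ 2 • (1 : Matrix (Fin n) (Fin n) ℝ) - Aᵀ * A with hM
  have hMpsd : M.PosSemidef := by
    refine Matrix.PosSemidef.of_dotProduct_mulVec_nonneg ?_ ?_
    · rw [Matrix.IsHermitian, hM]
      simp [Matrix.conjTranspose_smul, Matrix.conjTranspose_mul]
    · intro x
      have hx : star x ⬝ᵥ (M *ᵥ x) = c ^ 2 * ∑ i, x i ^ 2 - ∑ i, (A *ᵥ x) i ^ 2 := by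
        rw [hM, Matrix.sub_mulVec, dotProduct_sub, Matrix.smul_mulVec, Matrix.one_mulVec,
          dotProduct_smul, ← Matrix.mulVec_mulVec, Matrix.dotProduct_mulVec,
          star_trivial]
        congr 1
        · simp [dotProduct, sq]
        · rw [Matrix.vecMul_transpose]
          simp [dotProduct, sq]
      rw [hx]
      have := euclid_mulVec_bound A x
      linarith
  have h0 := gram_nonneg hMpsd z
  have h1 : ∑ j, ∑ k, (c ^ 2 • (1 : Matrix (Fin n) (Fin n) ℝ)) j k * (inner ℝ (z j) (z k) : ℝ)
      = c ^ 2 * ∑ j, ‖z j‖ ^ 2 := by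
    rw [Finset.mul_sum]
    refine Finset.sum_congr rfl fun j _ => ?_
    rw [Finset.sum_eq_single j]
    · simp [Matrix.one_apply, real_inner_self_eq_norm_sq]
    · intro k _ hk
      simp [Matrix.one_apply, Ne.symm hk]
    · simp
  have h2 : ∑ j, ∑ k, (Aᵀ * A) j k * (inner ℝ (z j) (z k) : ℝ)
      = ∑ i, ‖∑ j, A i j • z j‖ ^ 2 := by
    calc ∑ j, ∑ k, (Aᵀ * A) j k * (inner ℝ (z j) (z k) : ℝ)
        = ∑ j, ∑ k, ∑ i, A i j * A i k * (inner ℝ (z j) (z k) : ℝ) := by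
          refine Finset.sum_congr rfl fun j _ => Finset.sum_congr rfl fun k _ => ?_
          rw [Matrix.mul_apply, Finset.sum_mul]
          refine Finset.sum_congr rfl fun i _ => ?_
          simp [Matrix.transpose_apply]
      _ = ∑ i, ∑ j, ∑ k, A i j * A i k * (inner ℝ (z j) (z k) : ℝ) := sum_rotate3 _
      _ = ∑ i, ‖∑ j, A i j • z j‖ ^ 2 := by
          refine Finset.sum_congr rfl fun i _ => ?_
          rw [sq_norm_sum_smul]
  have hexp : ∑ j, ∑ k, M j k * (inner ℝ (z j) (z k) : ℝ)
      = c ^ 2 * ∑ j, ‖z j‖ ^ 2 - ∑ i, ‖∑ j, A i j • z j‖ ^ 2 := by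
    rw [← h1, ← h2, ← Finset.sum_sub_distrib]
    refine Finset.sum_congr rfl fun j _ => ?_
    rw [← Finset.sum_sub_distrib]
    refine Finset.sum_congr rfl fun k _ => ?_
    rw [hM]
    simp [Matrix.sub_apply, sub_mul]
  rw [hexp] at h0
  linarith

open Matrix Finset in
private lemma sigma2_op_le_one {n : ℕ} (hn : 1 ≤ n) (W : Matrix (Fin n) (Fin n) ℝ)
    (hnonneg : ∀ i j, 0 ≤ W i j)
    (hrow : ∀ i, ∑ j, W i j = 1)
    (hcol : ∀ j, ∑ i, W i j = 1) :
    ‖(Matrix.toEuclideanCLM (𝕜 := ℝ)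
        (W - (n : ℝ)⁻¹ • Matrix.of fun _ _ => (1 : ℝ)) :
      EuclideanSpace ℝ (Fin n) →L[ℝ] EuclideanSpace ℝ (Fin n))‖ ≤ 1 := by
  have hn0 : (n : ℝ) ≠ 0 := Nat.cast_ne_zero.mpr (by omega)
  set A : Matrix (Fin n) (Fin n) ℝ := W - (n : ℝ)⁻¹ • Matrix.of fun _ _ => (1 : ℝ) with hA
  refine ContinuousLinearMap.opNorm_le_bound _ zero_le_one fun x => ?_
  set v : Fin n → ℝ := WithLp.equiv 2 _ x with hv
  set m : ℝ := (n : ℝ)⁻¹ * ∑ j, v j with hm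
  set z : Fin n → ℝ := fun j => v j - m with hz
  have hsum : ∑ j, v j = (n : ℝ) * m := by
    rw [hm]; field_simp
  have hAx : Matrix.toEuclideanCLM (𝕜 := ℝ) A x = (WithLp.equiv 2 _).symm (A *ᵥ v) := by
    have := Matrix.ofLp_toEuclideanCLM (𝕜 := ℝ) A x
    apply (WithLp.equiv 2 _).injective
    exact this
  have hcoord : ∀ i, (A *ᵥ v) i = ∑ j, W i j * z j := by
    intro i
    rw [hA]
    simp only [Matrix.mulVec, dotProduct, Matrix.sub_apply, Matrix.smul_apply, Matrix.of_apply,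
      smul_eq_mul, one_mul, sub_mul]
    rw [Finset.sum_sub_distrib]
    have h4 : ∑ j, (n : ℝ)⁻¹ * 1 * v j = m := by
      simp only [mul_one]
      rw [hm, Finset.mul_sum]
    rw [h4]
    have : ∑ j, W i j * z j = ∑ j, W i j * v j - ∑ j, W i j * m := by
      rw [← Finset.sum_sub_distrib]
      refine Finset.sum_congr rfl fun j _ => ?_
      rw [hz]; ring
    rw [this, ← Finset.sum_mul, hrow i, one_mul]
  have key : ∑ i, (A *ᵥ v) i ^ 2 ≤ ∑ j, v j ^ 2 := by
    have step1 : ∀ i, (A *ᵥ v) i ^ 2 ≤ ∑ j, W i j * z j ^ 2 := by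
      intro i
      rw [hcoord i]
      have hcs := Finset.sum_mul_sq_le_sq_mul_sq Finset.univ
        (fun j => Real.sqrt (W i j)) (fun j => Real.sqrt (W i j) * z j)
      have e1 : ∀ j, Real.sqrt (W i j) * (Real.sqrt (W i j) * z j) = W i j * z j := by
        intro j; rw [← mul_assoc, Real.mul_self_sqrt (hnonneg i j)]
      have e2 : ∀ j, Real.sqrt (W i j) ^ 2 = W i j := fun j => Real.sq_sqrt (hnonneg i j)
      have e3 : ∀ j, (Real.sqrt (W i j) * z j) ^ 2 = W i j * z j ^ 2 := by
        intro j; rw [mul_pow, e2]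
      simp only [e1, e2, e3] at hcs
      calc (∑ j, W i j * z j) ^ 2 ≤ (∑ j, W i j) * ∑ j, W i j * z j ^ 2 := hcs
        _ = ∑ j, W i j * z j ^ 2 := by rw [hrow i, one_mul]
    have step2 : ∑ i, ∑ j, W i j * z j ^ 2 = ∑ j, z j ^ 2 := by
      rw [Finset.sum_comm]
      refine Finset.sum_congr rfl fun j _ => ?_
      rw [← Finset.sum_mul, hcol j, one_mul]
    have step3 : ∑ j, z j ^ 2 ≤ ∑ j, v j ^ 2 := by
      have heq : ∑ j, z j ^ 2 = ∑ j, v j ^ 2 - (n : ℝ) * m ^ 2 := by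
        have expand : ∀ j, z j ^ 2 = v j ^ 2 - 2 * m * v j + m ^ 2 := by
          intro j; rw [hz]; ring
        simp only [expand]
        rw [Finset.sum_add_distrib, Finset.sum_sub_distrib, ← Finset.mul_sum, hsum,
          Finset.sum_const, Finset.card_univ, Fintype.card_fin, nsmul_eq_mul]
        ring
      rw [heq]
      have : 0 ≤ (n : ℝ) * m ^ 2 := by positivity
      linarith
    calc ∑ i, (A *ᵥ v) i ^ 2 ≤ ∑ i, ∑ j, W i j * z j ^ 2 :=
          Finset.sum_le_sum fun i _ => step1 i
      _ = ∑ j, z j ^ 2 := step2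
      _ ≤ ∑ j, v j ^ 2 := step3
  rw [hAx, one_mul]
  have hn1 : ‖(WithLp.equiv 2 ((Fin n) → ℝ)).symm (A *ᵥ v)‖
      = Real.sqrt (∑ i, (A *ᵥ v) i ^ 2) := by
    rw [EuclideanSpace.norm_eq]; simp [Real.norm_eq_abs, sq_abs]
  have hn2 : ‖x‖ = Real.sqrt (∑ i, v i ^ 2) := by
    rw [EuclideanSpace.norm_eq]; simp [Real.norm_eq_abs, sq_abs, hv]
  rw [hn1, hn2]
  exact Real.sqrt_le_sqrt key

/-- `σ₂(W)`: the operator norm of `W − (1/n)𝟙𝟙ᵀ` acting on Euclidean `n`-space. -/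
noncomputable def sigma2 {n : ℕ} (W : Matrix (Fin n) (Fin n) ℝ) : ℝ :=
  ‖(Matrix.toEuclideanCLM (𝕜 := ℝ) (W - (n : ℝ)⁻¹ • Matrix.of fun _ _ => (1 : ℝ)) :
      EuclideanSpace ℝ (Fin n) →L[ℝ] EuclideanSpace ℝ (Fin n))‖

theorem stmt2 {n : ℕ} (hn : 1 ≤ n) (W : Matrix (Fin n) (Fin n) ℝ)
    (hsymm : W.IsSymm)
    (hnonneg : ∀ i j, 0 ≤ W i j)
    (hrow : ∀ i, ∑ j, W i j = 1)
    (hcol : ∀ j, ∑ i, W i j = 1)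
    (ρ : ℝ) (hρ : ρ = 1 - (1 - sigma2 W) / 4)
    {E : Type*} [NormedAddCommGroup E] [InnerProductSpace ℝ E]
    (y x : Fin n → E)
    (hx : ∀ i, x i = y i + (2 : ℝ)⁻¹ • ∑ j, W i j • (y j - y i))
    (ybar : E) (hybar : ybar = (n : ℝ)⁻¹ • ∑ i, y i) :
    ((n : ℝ)⁻¹ • ∑ i, x i = ybar) ∧
    (∑ i, ‖x i - ybar‖ ^ 2 ≤ ρ * ∑ i, ‖y i - ybar‖ ^ 2) ∧
    ((n : ℝ)⁻¹ * ∑ i, ‖x i - (n : ℝ)⁻¹ • ∑ j, x j‖ ^ 2 ≤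
      ρ * ((n : ℝ)⁻¹ * ∑ i, ‖y i - ybar‖ ^ 2)) := by
  have hn0 : (n : ℝ) ≠ 0 := Nat.cast_ne_zero.mpr (by omega)
  set σ : ℝ := sigma2 W with hσ
  have hσ0 : 0 ≤ σ := norm_nonneg _
  have hσ1 : σ ≤ 1 := sigma2_op_le_one hn W hnonneg hrow hcol
  set A : Matrix (Fin n) (Fin n) ℝ := W - (n : ℝ)⁻¹ • Matrix.of fun _ _ => (1 : ℝ) with hA
  set z : Fin n → E := fun i => y i - ybar with hz
  -- sum of z is zero
  have hzsum : ∑ i, z i = 0 := by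
    rw [hz]
    simp only [Finset.sum_sub_distrib, Finset.sum_const, Finset.card_univ, Fintype.card_fin]
    rw [hybar, ← Nat.cast_smul_eq_nsmul ℝ, smul_smul]
    rw [show (n : ℝ) * (n : ℝ)⁻¹ = 1 by field_simp]
    simp
  -- row sums applied to smul
  have hrowsmul : ∀ i (e : E), ∑ j, W i j • e = e := by
    intro i e
    rw [← Finset.sum_smul, hrow i, one_smul]
  -- part 1 : mean preservation
  have hdz : ∑ i, ∑ j, W i j • (y j - y i) = 0 := by
    have e : ∀ i, ∑ j, W i j • (y j - y i) = (∑ j, W i j • y j) - y i := by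
      intro i
      simp only [smul_sub, Finset.sum_sub_distrib]
      rw [← Finset.sum_smul, hrow i, one_smul]
    simp only [e, Finset.sum_sub_distrib]
    rw [sub_eq_zero, Finset.sum_comm]
    refine Finset.sum_congr rfl fun j _ => ?_
    rw [← Finset.sum_smul, hcol j, one_smul]
  have hmean : ∑ i, x i = ∑ i, y i := by
    simp only [hx]
    rw [Finset.sum_add_distrib, ← Finset.smul_sum, hdz, smul_zero, add_zero]
  have part1 : (n : ℝ)⁻¹ • ∑ i, x i = ybar := by rw [hmean, ← hybar]
  -- key representation
  have hzi : ∀ i, y i - ybar = z i := fun i => rfl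
  have hw : ∀ i, ∑ j, A i j • z j = ∑ j, W i j • z j := by
    intro i
    rw [hA]
    simp only [Matrix.sub_apply, Matrix.smul_apply, Matrix.of_apply, smul_eq_mul, mul_one,
      sub_smul]
    rw [Finset.sum_sub_distrib]
    have : ∑ j, (n : ℝ)⁻¹ • z j = (0 : E) := by
      rw [← Finset.smul_sum, hzsum, smul_zero]
    rw [this, sub_zero]
  have hkey : ∀ i, x i - ybar = (2 : ℝ)⁻¹ • (z i + ∑ j, A i j • z j) := by
    intro i
    rw [hw i, hx i]
    have h5 : ∑ j, W i j • (y j - y i) = (∑ j, W i j • z j) - z i := by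
      have e : ∀ j, y j - y i = z j - z i := by
        intro j; rw [hz]; simp only; abel
      simp only [e, smul_sub, Finset.sum_sub_distrib]
      rw [← Finset.sum_smul, hrow i, one_smul]
    rw [h5]
    have hyi : y i = z i + ybar := by rw [hz]; simp only; abel
    rw [hyi]
    module
  -- quantities
  set w : Fin n → E := fun i => ∑ j, A i j • z j with hwdef
  set S : ℝ := ∑ i, ‖z i‖ ^ 2 with hS
  set T : ℝ := ∑ i, ‖w i‖ ^ 2 with hT
  set P : ℝ := ∑ i, ‖z i‖ * ‖w i‖ with hP
  have hσA : σ = ‖(Matrix.toEuclideanCLM (𝕜 := ℝ) A :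
      EuclideanSpace ℝ (Fin n) →L[ℝ] EuclideanSpace ℝ (Fin n))‖ := by
    rw [hσ, hA]; rfl
  have hTσ : T ≤ σ ^ 2 * S := by
    rw [hT, hS, hσA]
    exact sum_norm_smul_le A z
  have hS0 : (0:ℝ) ≤ S := Finset.sum_nonneg fun _ _ => sq_nonneg _
  have hP0 : (0:ℝ) ≤ P := Finset.sum_nonneg fun _ _ =>
    mul_nonneg (norm_nonneg _) (norm_nonneg _)
  have hP2 : P ^ 2 ≤ S * T := by
    rw [hP, hS, hT]
    exact Finset.sum_mul_sq_le_sq_mul_sq Finset.univ _ _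
  have hPle : P ≤ σ * S := by
    nlinarith [mul_le_mul_of_nonneg_left hTσ hS0, mul_nonneg hσ0 hS0]
  have hip : ∑ i, (inner ℝ (z i) (w i) : ℝ) ≤ P := by
    rw [hP]
    exact Finset.sum_le_sum fun i _ => real_inner_le_norm _ _
  have hsum2 : ∑ i, ‖x i - ybar‖ ^ 2 = 4⁻¹ * (S + 2 * ∑ i, (inner ℝ (z i) (w i) : ℝ) + T) := by
    have e : ∀ i, ‖x i - ybar‖ ^ 2
        = 4⁻¹ * (‖z i‖ ^ 2 + 2 * (inner ℝ (z i) (w i) : ℝ) + ‖w i‖ ^ 2) := by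
      intro i
      rw [hkey i, show (z i + ∑ j, A i j • z j) = z i + w i from rfl,
        norm_smul, mul_pow, norm_add_sq_real, Real.norm_eq_abs,
        abs_of_nonneg (by norm_num : (0:ℝ) ≤ (2:ℝ)⁻¹)]
      ring
    simp only [e]
    rw [← Finset.mul_sum, hS, hT]
    congr 1
    rw [Finset.sum_add_distrib, Finset.sum_add_distrib, ← Finset.mul_sum]
  have part2 : ∑ i, ‖x i - ybar‖ ^ 2 ≤ ρ * ∑ i, ‖y i - ybar‖ ^ 2 := by
    simp only [hzi]
    rw [← hS, hsum2, hρ]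
    nlinarith [mul_nonneg hS0 (sub_nonneg.mpr hσ1), mul_nonneg (mul_nonneg hσ0 hS0) (sub_nonneg.mpr hσ1)]
  refine ⟨part1, part2, ?_⟩
  have hxb : ∀ i, x i - (n : ℝ)⁻¹ • ∑ j, x j = x i - ybar := by
    intro i; rw [part1]
  simp only [hxb]
  have hnn : (0:ℝ) ≤ (n : ℝ)⁻¹ := by positivity
  calc (n : ℝ)⁻¹ * ∑ i, ‖x i - ybar‖ ^ 2
      ≤ (n : ℝ)⁻¹ * (ρ * ∑ i, ‖y i - ybar‖ ^ 2) := mul_le_mul_of_nonneg_left part2 hnn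
    _ = ρ * ((n : ℝ)⁻¹ * ∑ i, ‖y i - ybar‖ ^ 2) := by ring
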